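/- Let C_k(𝒜, v) be a generalized affine Cartesian code with 1 ≤ k ≤ Σ_{i=1}^m (n_i − 1), and set k′ := Σ_{i=1}^m (n_i − 1) − k + 1. Then dim_K C_k(𝒜, v) + dim_K C_{k′}(𝒜, v) = n_1⋯n_m. -/

import Mathlib

open MvPolynomial

/-- The points of the Cartesian set `𝒜 = A 0 × ⋯ × A (m-1)`. -/
abbrev CartPts {K : Type*} {m : ℕ} (A : Fin m → Finset K) :=
  { x : Fin m → K // ∀ i, x i ∈ A i }

/-- The space `S_{<k}` of multivariate polynomials of total degree less than `k`. -/
def degLT (K : Type*) [Field K] (m k : ℕ) : Submodule K (MvPolynomial (Fin m) K) where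
  carrier := {f | ∀ d ∈ f.support, (d.sum fun _ e => e) < k}
  zero_mem' := by simp
  add_mem' := fun {f g} hf hg d hd => by
    rcases Finset.mem_union.mp (MvPolynomial.support_add hd) with h | h
    exacts [hf d h, hg d h]
  smul_mem' := fun c f hf d hd => hf d (MvPolynomial.support_smul hd)

/-- The evaluation map `ev : f ↦ (v_a · f(a))_{a ∈ 𝒜}`. -/
noncomputable def evalLM {K : Type*} [Field K] {m : ℕ} (A : Fin m → Finset K)
    (v : CartPts A → K) : MvPolynomial (Fin m) K →ₗ[K] (CartPts A → K) :=
  LinearMap.pi fun a => v a • (MvPolynomial.aeval (a.1 : Fin m → K)).toLinearMap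

/-- The generalized affine Cartesian code `C_k(𝒜, v)`, the image of `S_{<k}` under `ev_k`. -/
noncomputable def cartCode {K : Type*} [Field K] {m : ℕ} (k : ℕ) (A : Fin m → Finset K)
    (v : CartPts A → K) : Submodule K (CartPts A → K) :=
  Submodule.map (evalLM A v) (degLT K m k)

namespace CartCodeAux

variable {K : Type*} [Field K] {m : ℕ}

/-- An enumeration of the elements of `A i`. -/
noncomputable def w (A : Fin m → Finset K) (i : Fin m) (l : ℕ) : K :=
  if h : l < (A i).card then ((A i).equivFin.symm ⟨l, h⟩ : K) else 0

lemma w_mem (A : Fin m → Finset K) {i : Fin m} {l : ℕ} (h : l < (A i).card) :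
    w A i l ∈ A i := by
  rw [w, dif_pos h]; exact Subtype.coe_prop _

lemma w_inj (A : Fin m → Finset K) {i : Fin m} {l l' : ℕ} (h : l < (A i).card)
    (h' : l' < (A i).card) (he : w A i l = w A i l') : l = l' := by
  simp only [w] at he
  rw [dif_pos h, dif_pos h'] at he
  simpa using congrArg Fin.val ((A i).equivFin.symm.injective (Subtype.coe_injective he))

lemma w_surj (A : Fin m → Finset K) {i : Fin m} {x : K} (hx : x ∈ A i) :
    ∃ l, l < (A i).card ∧ w A i l = x := by
  refine ⟨((A i).equivFin ⟨x, hx⟩ : ℕ), ((A i).equivFin ⟨x, hx⟩).isLt, ?_⟩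
  rw [w, dif_pos ((A i).equivFin ⟨x, hx⟩).isLt]
  simp

/-- Grid points indexed by tuples of indices. -/
noncomputable def pt (A : Fin m → Finset K) (t : ∀ i, Fin (A i).card) : CartPts A :=
  ⟨fun i => w A i (t i), fun i => w_mem A (t i).isLt⟩

/-- Univariate auxiliary polynomial `∏_{l<j} (X - w i l)`. -/
noncomputable def puni (A : Fin m → Finset K) (i : Fin m) (j : ℕ) : Polynomial K :=
  ∏ l ∈ Finset.range j, (Polynomial.X - Polynomial.C (w A i l))

lemma puni_monic (A : Fin m → Finset K) (i : Fin m) (j : ℕ) : (puni A i j).Monic :=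
  Polynomial.monic_prod_of_monic _ _ fun _ _ => Polynomial.monic_X_sub_C _

lemma puni_natDegree (A : Fin m → Finset K) (i : Fin m) (j : ℕ) :
    (puni A i j).natDegree = j := by
  rw [puni, Polynomial.natDegree_prod_of_monic _ _ fun _ _ => Polynomial.monic_X_sub_C _]
  simp

/-- The multivariate version `∏_{l<j} (X i - w i l)`. -/
noncomputable def PB (A : Fin m → Finset K) (i : Fin m) (j : ℕ) : MvPolynomial (Fin m) K :=
  ∏ l ∈ Finset.range j, (X i - C (w A i l))

lemma PB_eq (A : Fin m → Finset K) (i : Fin m) (j : ℕ) :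
    PB A i j = Polynomial.aeval (X i) (puni A i j) := by
  rw [puni, map_prod, PB]
  refine Finset.prod_congr rfl fun l _ => ?_
  rw [map_sub, Polynomial.aeval_X, Polynomial.aeval_C, MvPolynomial.algebraMap_eq]

/-- The triangular basis polynomials. -/
noncomputable def BB (A : Fin m → Finset K) (d : ∀ i, Fin (A i).card) :
    MvPolynomial (Fin m) K :=
  ∏ i, PB A i (d i)

lemma totalDegree_PB (A : Fin m → Finset K) (i : Fin m) (j : ℕ) :
    (PB A i j).totalDegree ≤ j := by
  refine le_trans (MvPolynomial.totalDegree_finset_prod _ _) ?_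
  calc ∑ l ∈ Finset.range j, (X i - C (w A i l)).totalDegree
      ≤ ∑ _l ∈ Finset.range j, 1 := by
        refine Finset.sum_le_sum fun l _ => ?_
        rw [sub_eq_add_neg, ← map_neg]
        refine le_trans (MvPolynomial.totalDegree_add _ _) ?_
        simp [MvPolynomial.totalDegree_X]
    _ = j := by simp

lemma totalDegree_BB (A : Fin m → Finset K) (d : ∀ i, Fin (A i).card) :
    (BB A d).totalDegree ≤ ∑ i, (d i : ℕ) :=
  le_trans (MvPolynomial.totalDegree_finset_prod _ _)
    (Finset.sum_le_sum fun i _ => totalDegree_PB A i (d i))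

lemma aeval_PB (A : Fin m → Finset K) (a : Fin m → K) (i : Fin m) (j : ℕ) :
    aeval a (PB A i j) = ∏ l ∈ Finset.range j, (a i - w A i l) := by
  rw [PB, map_prod]
  refine Finset.prod_congr rfl fun l _ => ?_
  rw [map_sub, aeval_X, aeval_C]
  simp

lemma aeval_PB_card (A : Fin m → Finset K) (a : CartPts A) (i : Fin m) :
    aeval a.1 (PB A i ((A i).card)) = 0 := by
  obtain ⟨l, hl, hw⟩ := w_surj A (a.2 i)
  rw [aeval_PB]
  exact Finset.prod_eq_zero (Finset.mem_range.mpr hl) (by rw [hw, sub_self])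

lemma ev_apply (A : Fin m → Finset K) (v : CartPts A → K) (f : MvPolynomial (Fin m) K)
    (a : CartPts A) : evalLM A v f a = v a * aeval a.1 f := rfl

lemma ev_mul_PB (A : Fin m → Finset K) (v : CartPts A → K) (f : MvPolynomial (Fin m) K)
    (i : Fin m) : evalLM A v (f * PB A i ((A i).card)) = 0 := by
  funext a
  rw [ev_apply, map_mul, aeval_PB_card]
  simp

lemma aeval_pt_BB (A : Fin m → Finset K) (t d : ∀ i, Fin (A i).card) :
    aeval (pt A t).1 (BB A d) = ∏ i, ∏ l ∈ Finset.range (d i), (w A i (t i) - w A i l) := by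
  rw [BB, map_prod]
  exact Finset.prod_congr rfl fun i _ => aeval_PB A _ i (d i)

lemma aeval_pt_BB_eq_zero (A : Fin m → Finset K) {t d : ∀ i, Fin (A i).card}
    (h : ∃ i, (t i : ℕ) < (d i : ℕ)) : aeval (pt A t).1 (BB A d) = 0 := by
  obtain ⟨i, hi⟩ := h
  rw [aeval_pt_BB]
  exact Finset.prod_eq_zero (Finset.mem_univ i)
    (Finset.prod_eq_zero (Finset.mem_range.mpr hi) (sub_self _))

lemma aeval_pt_BB_self_ne_zero (A : Fin m → Finset K) (d : ∀ i, Fin (A i).card) :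
    aeval (pt A d).1 (BB A d) ≠ 0 := by
  rw [aeval_pt_BB]
  refine Finset.prod_ne_zero_iff.mpr fun i _ => Finset.prod_ne_zero_iff.mpr fun l hl => ?_
  have hl' : l < (d i : ℕ) := Finset.mem_range.mp hl
  refine sub_ne_zero_of_ne fun he => ?_
  have := w_inj A (d i).isLt (lt_trans hl' (d i).isLt) he
  omega

lemma li_BB (A : Fin m → Finset K) (v : CartPts A → K) (hv : ∀ a, v a ≠ 0) :
    LinearIndependent K fun d : ∀ i, Fin (A i).card => evalLM A v (BB A d) := by
  classical
  rw [Fintype.linearIndependent_iff]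
  intro c hc
  by_contra hne
  push_neg at hne
  obtain ⟨d0, hd0⟩ := hne
  obtain ⟨d, hd, hmin⟩ := Finset.exists_minimal
    (s := Finset.univ.filter fun d => c d ≠ 0) ⟨d0, by simpa using hd0⟩
  simp only [Finset.mem_filter, Finset.mem_univ, true_and] at hd
  have h0 := congrFun hc (pt A d)
  rw [Finset.sum_apply] at h0
  have h1 : ∀ d' ∈ Finset.univ, d' ≠ d →
      (c d' • evalLM A v (BB A d')) (pt A d) = 0 := by
    intro d' _ hne'
    by_cases hc' : c d' = 0
    · simp [hc']
    · have hnlt : ¬ d' < d := fun hlt' => hlt'.not_ge (hmin (by simpa using hc') hlt'.le)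
      have hex : ∃ i, (d i : ℕ) < (d' i : ℕ) := by
        by_contra hall
        push_neg at hall
        exact hnlt (lt_of_le_of_ne (fun i => Fin.le_def.mpr (hall i)) hne')
      rw [Pi.smul_apply, ev_apply, aeval_pt_BB_eq_zero A hex, mul_zero, smul_zero]
  rw [Finset.sum_eq_single_of_mem d (Finset.mem_univ d) h1, Pi.smul_apply, ev_apply,
    smul_eq_mul] at h0
  rcases mul_eq_zero.mp h0 with h | h
  · exact hd h
  rcases mul_eq_zero.mp h with h | h
  · exact hv _ h
  · exact aeval_pt_BB_self_ne_zero A d h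

/-- The generator associated to a reduced exponent tuple. -/
noncomputable def gen (A : Fin m → Finset K) (v : CartPts A → K)
    (d : ∀ i, Fin (A i).card) : CartPts A → K :=
  evalLM A v (monomial (Finsupp.equivFunOnFinite.symm fun i => ((d i : ℕ))) (1 : K))

/-- Span of generators of weight at most `s`. -/
noncomputable def SpanLE (A : Fin m → Finset K) (v : CartPts A → K) (s : ℕ) :
    Submodule K (CartPts A → K) :=
  Submodule.span K {x | ∃ d : ∀ i, Fin (A i).card, (∑ i, ((d i : ℕ))) ≤ s ∧ x = gen A v d}

lemma SpanLE_mono (A : Fin m → Finset K) (v : CartPts A → K) {s s' : ℕ} (h : s ≤ s') :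
    SpanLE A v s ≤ SpanLE A v s' :=
  Submodule.span_mono fun x ⟨d, hd, hx⟩ => ⟨d, le_trans hd h, hx⟩

lemma reduce (A : Fin m → Finset K) (hA : ∀ i, (A i).Nonempty) (v : CartPts A → K)
    (u : Fin m →₀ ℕ) : evalLM A v (monomial u 1) ∈ SpanLE A v (∑ i, u i) := by
  classical
  generalize hN : (∑ i, u i) = N
  induction N using Nat.strong_induction_on generalizing u with
  | _ N ih =>
  by_cases hred : ∀ i, u i < (A i).card
  · refine Submodule.subset_span ⟨fun i => ⟨u i, hred i⟩, hN.le, ?_⟩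
    show evalLM A v (monomial u 1) = evalLM A v
      (monomial (Finsupp.equivFunOnFinite.symm fun i => u i) 1)
    rw [Finsupp.equivFunOnFinite_symm_coe]
  · push_neg at hred
    obtain ⟨i, hi⟩ := hred
    set n := (A i).card with hn
    have hn1 : 1 ≤ n := Finset.card_pos.mpr (hA i)
    set u' : Fin m →₀ ℕ := u - Finsupp.single i n with hu'
    have hle : Finsupp.single i n ≤ u := Finsupp.single_le_iff.mpr hi
    have hadd : u' + Finsupp.single i n = u := tsub_add_cancel_of_le hle
    set s : Polynomial K := Polynomial.X ^ n - puni A i n with hs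
    have hsdeg : s.natDegree < n := by
      by_cases h0 : s = 0
      · rw [h0, Polynomial.natDegree_zero]; exact hn1
      · have hdeg : s.degree < (Polynomial.X ^ n : Polynomial K).degree := by
          refine Polynomial.degree_sub_lt ?_ (by simp) ?_
          · rw [Polynomial.degree_X_pow,
              Polynomial.degree_eq_natDegree (puni_monic A i n).ne_zero, puni_natDegree]
          · simp [Polynomial.leadingCoeff_X_pow, (puni_monic A i n).leadingCoeff]
        rw [Polynomial.degree_X_pow] at hdeg
        exact (Polynomial.natDegree_lt_iff_degree_lt h0).mpr hdeg
    have hXn : (X i : MvPolynomial (Fin m) K) ^ n = PB A i n + Polynomial.aeval (X i) s := by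
      have h' : puni A i n + s = Polynomial.X ^ n := by rw [hs]; ring
      rw [PB_eq, ← map_add, h', map_pow, Polynomial.aeval_X]
    have hmonu : (monomial u (1 : K)) =
        monomial u' 1 * PB A i n + monomial u' 1 * Polynomial.aeval (X i) s := by
      rw [← mul_add, ← hXn, X_pow_eq_monomial, monomial_mul, one_mul, hadd]
    have hsum : evalLM A v (monomial u 1) =
        ∑ j ∈ Finset.range n, s.coeff j • evalLM A v (monomial (u' + Finsupp.single i j) 1) := by
      rw [hmonu, map_add, ev_mul_PB, zero_add,
        Polynomial.aeval_eq_sum_range' hsdeg (X i), Finset.mul_sum, map_sum]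
      refine Finset.sum_congr rfl fun j _ => ?_
      rw [mul_smul_comm, map_smul, X_pow_eq_monomial, monomial_mul, one_mul]
    rw [hsum]
    have hnN : n ≤ N := by
      rw [← hN]
      exact le_trans hi (Finset.single_le_sum (f := fun i => u i)
        (fun _ _ => Nat.zero_le _) (Finset.mem_univ i))
    refine Submodule.sum_mem _ fun j hj => Submodule.smul_mem _ _ ?_
    have hj' : j < n := Finset.mem_range.mp hj
    have hcoe : ∀ i', (u' + Finsupp.single i j) i'
        = u i' - (Finsupp.single i n) i' + (Finsupp.single i j) i' := by
      intro i'
      simp [hu', Finsupp.add_apply, Finsupp.tsub_apply]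
    have e1 : (∑ i', (u' + Finsupp.single i j) i')
        = (u i - n + j) + ∑ i' ∈ Finset.univ.erase i, u i' := by
      rw [← Finset.add_sum_erase _ _ (Finset.mem_univ i)]
      congr 1
      · rw [hcoe]; simp [Finsupp.single_apply]
      · refine Finset.sum_congr rfl fun i' hi' => ?_
        have hne : ¬ (i = i') := fun h => (Finset.mem_erase.mp hi').1 h.symm
        rw [hcoe]
        simp [Finsupp.single_apply, hne]
    have e2 : N = u i + ∑ i' ∈ Finset.univ.erase i, u i' := by
      rw [← hN, ← Finset.add_sum_erase _ _ (Finset.mem_univ i)]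
    have hsum_j : (∑ i', (u' + Finsupp.single i j) i') = N - n + j := by omega
    have hlt : N - n + j < N := by omega
    exact SpanLE_mono A v hlt.le (ih (N - n + j) hlt _ hsum_j)

variable [Fintype K] [DecidableEq K]

lemma finrank_cartCode (A : Fin m → Finset K) (hA : ∀ i, (A i).Nonempty)
    (v : CartPts A → K) (hv : ∀ a, v a ≠ 0) (k : ℕ) :
    Module.finrank K (cartCode k A v)
      = (Finset.univ.filter fun d : ∀ i, Fin (A i).card => (∑ i, ((d i : ℕ))) < k).card := by
  classical
  have hcard : (Finset.univ.filter
        fun d : ∀ i, Fin (A i).card => (∑ i, ((d i : ℕ))) < k).card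
      = Fintype.card {d : ∀ i, Fin (A i).card // (∑ i, ((d i : ℕ))) < k} :=
    (Fintype.card_subtype _).symm
  apply le_antisymm
  · have hle : cartCode k A v ≤ Submodule.span K (Set.range
        fun d : {d : ∀ i, Fin (A i).card // (∑ i, ((d i : ℕ))) < k} => gen A v d.1) := by
      rintro x ⟨f, hf, rfl⟩
      rw [show f = ∑ u ∈ f.support, monomial u (coeff u f) from f.as_sum, map_sum]
      refine Submodule.sum_mem _ fun u hu => ?_
      have h1 : evalLM A v (monomial u (coeff u f))
          = coeff u f • evalLM A v (monomial u 1) := by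
        rw [← map_smul]
        congr 1
        rw [MvPolynomial.smul_monomial, smul_eq_mul, mul_one]
      rw [h1]
      refine Submodule.smul_mem _ _ ?_
      have hk' : (∑ i, u i) < k := by
        have := hf u hu
        rwa [Finsupp.sum_fintype _ _ (fun _ => rfl)] at this
      refine (Submodule.span_le.mpr ?_) (reduce A hA v u)
      rintro x ⟨d, hd, rfl⟩
      exact Submodule.subset_span ⟨⟨d, lt_of_le_of_lt hd hk'⟩, rfl⟩
    calc Module.finrank K (cartCode k A v)
        ≤ Module.finrank K (Submodule.span K (Set.range
            fun d : {d : ∀ i, Fin (A i).card // (∑ i, ((d i : ℕ))) < k} => gen A v d.1)) :=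
          Submodule.finrank_mono hle
      _ ≤ Fintype.card {d : ∀ i, Fin (A i).card // (∑ i, ((d i : ℕ))) < k} :=
          finrank_range_le_card _
      _ = _ := hcard.symm
  · have hli : LinearIndependent K
        fun d : {d : ∀ i, Fin (A i).card // (∑ i, ((d i : ℕ))) < k} =>
          evalLM A v (BB A d.1) :=
      (li_BB A v hv).comp _ Subtype.val_injective
    have hspan : Submodule.span K (Set.range
        fun d : {d : ∀ i, Fin (A i).card // (∑ i, ((d i : ℕ))) < k} =>
          evalLM A v (BB A d.1)) ≤ cartCode k A v := by
      rw [Submodule.span_le]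
      rintro x ⟨d, rfl⟩
      exact ⟨BB A d.1, fun e he =>
        lt_of_le_of_lt (le_trans (MvPolynomial.le_totalDegree he) (totalDegree_BB A d.1)) d.2,
        rfl⟩
    calc (Finset.univ.filter
          fun d : ∀ i, Fin (A i).card => (∑ i, ((d i : ℕ))) < k).card
        = Fintype.card {d : ∀ i, Fin (A i).card // (∑ i, ((d i : ℕ))) < k} := hcard
      _ = Module.finrank K (Submodule.span K (Set.range
            fun d : {d : ∀ i, Fin (A i).card // (∑ i, ((d i : ℕ))) < k} =>
              evalLM A v (BB A d.1))) := (finrank_span_eq_card hli).symm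
      _ ≤ Module.finrank K (cartCode k A v) := Submodule.finrank_mono hspan

end CartCodeAux

/-- With `k' = Σ (n_i − 1) − k + 1`, `dim C_k(𝒜,v) + dim C_{k'}(𝒜,v) = n_1 ⋯ n_m`. -/
theorem finrank_cartCode_add_finrank_cartCode {K : Type*} [Field K] [Fintype K] [DecidableEq K]
    {m : ℕ} (hm : 1 ≤ m) (A : Fin m → Finset K) (hA : ∀ i, (A i).Nonempty)
    (v : CartPts A → K) (hv : ∀ a, v a ≠ 0) (k : ℕ) (hk : 1 ≤ k)
    (hk2 : k ≤ ∑ i, ((A i).card - 1)) :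
    Module.finrank K (cartCode k A v) +
      Module.finrank K (cartCode (∑ i, ((A i).card - 1) - k + 1) A v) = ∏ i, (A i).card := by
  classical
  rw [CartCodeAux.finrank_cartCode A hA v hv k, CartCodeAux.finrank_cartCode A hA v hv _]
  set N := ∑ i, ((A i).card - 1) with hN
  have hlt : ∀ (d : ∀ i, Fin (A i).card) (i : Fin m), (A i).card - 1 - (d i : ℕ) < (A i).card :=
    fun d i => by have := (d i).isLt; omega
  have hS : ∀ d : ∀ i, Fin (A i).card,
      (∑ x, ((A x).card - 1 - (d x : ℕ))) + (∑ i, ((d i : ℕ))) = N := by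
    intro d
    rw [← Finset.sum_add_distrib, hN]
    exact Finset.sum_congr rfl fun i _ => by have := (d i).isLt; omega
  have key : (Finset.univ.filter
        fun d : ∀ i, Fin (A i).card => (∑ i, ((d i : ℕ))) < N - k + 1).card
      = (Finset.univ.filter
        fun d : ∀ i, Fin (A i).card => ¬ ((∑ i, ((d i : ℕ))) < k)).card := by
    refine Finset.card_bij' (fun d _ => fun i => ⟨(A i).card - 1 - (d i : ℕ), hlt d i⟩)
      (fun d _ => fun i => ⟨(A i).card - 1 - (d i : ℕ), hlt d i⟩) ?_ ?_ ?_ ?_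
    · intro d hd
      simp only [Finset.mem_filter, Finset.mem_univ, true_and] at hd ⊢
      have := hS d
      omega
    · intro d hd
      simp only [Finset.mem_filter, Finset.mem_univ, true_and] at hd ⊢
      have := hS d
      omega
    · intro d _
      funext i
      refine Fin.ext ?_
      have := (d i).isLt
      simp only [Fin.val_mk]
      omega
    · intro d _
      funext i
      refine Fin.ext ?_
      have := (d i).isLt
      simp only [Fin.val_mk]
      omega
  rw [key, Finset.card_filter_add_card_filter_not]
  simp [Finset.card_univ]
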